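/- Let (f_n)_{n≥1} be a sequence of continuous affine functions on a compact convex metrizable set K such that for every μ ∈ K the sequence (f_n(μ)) is subadditive (f_{n+m}(μ) ≤ f_n(μ) + f_m(μ)). Then the function μ ↦ inf_n f_n(μ)/n = lim_n f_n(μ)/n is upper semicontinuous and affine on K. -/

import Mathlib

open Filter


lemma fekete_iter (u : ℕ → ℝ) (hsub : ∀ n m : ℕ, 1 ≤ n → 1 ≤ m → u (n + m) ≤ u n + u m)
    (m : ℕ) (hm : 1 ≤ m) (r : ℕ) (hr : 1 ≤ r) :
    ∀ q : ℕ, u (q * m + r) ≤ q * u m + u r := by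
  intro q
  induction q with
  | zero => simp
  | succ q ih =>
      have h1 : (q + 1) * m + r = m + (q * m + r) := by ring
      have h2 : 1 ≤ q * m + r := le_trans hr (Nat.le_add_left _ _)
      calc u ((q + 1) * m + r) = u (m + (q * m + r)) := by rw [h1]
        _ ≤ u m + u (q * m + r) := hsub _ _ hm h2
        _ ≤ u m + (q * u m + u r) := by linarith
        _ = (q + 1 : ℕ) * u m + u r := by push_cast; ring

lemma fekete_bound (u : ℕ → ℝ) (hsub : ∀ n m : ℕ, 1 ≤ n → 1 ≤ m → u (n + m) ≤ u n + u m)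
    (m : ℕ) (hm : 1 ≤ m) :
    ∃ D : ℝ, 0 ≤ D ∧ ∀ n : ℕ, 1 ≤ n → u n / n ≤ u m / m + D / n := by
  set C : ℝ := ∑ r ∈ Finset.Icc 1 m, |u r| with hC
  have hCr : ∀ r ∈ Finset.Icc 1 m, |u r| ≤ C :=
    fun r hr => Finset.single_le_sum (fun i _ => abs_nonneg (u i)) hr
  have hC0 : 0 ≤ C := Finset.sum_nonneg fun i _ => abs_nonneg _
  set x : ℝ := u m / m with hx
  refine ⟨m * |x| + C, by positivity, fun n hn => ?_⟩
  have hex : ∃ q r : ℕ, 1 ≤ r ∧ r ≤ m ∧ q * m + r = n := by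
    refine ⟨(n - 1) / m, (n - 1) % m + 1, Nat.le_add_left _ _, ?_, ?_⟩
    · have := Nat.mod_lt (n - 1) (show 0 < m by omega); omega
    · have h := Nat.div_add_mod (n - 1) m
      have h2 : (n - 1) / m * m = m * ((n - 1) / m) := Nat.mul_comm _ _
      omega
  obtain ⟨q, r, hr1, hrm, hnr⟩ := hex
  have hun : u n ≤ q * u m + u r := by
    rw [← hnr]; exact fekete_iter u hsub m hm r hr1 q
  have hn0 : (0:ℝ) < n := by exact_mod_cast hn
  have hm0 : (0:ℝ) < m := by exact_mod_cast hm
  have hqm : (q : ℝ) * m = (n : ℝ) - r := by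
    have := congrArg (Nat.cast (R := ℝ)) hnr
    push_cast at this
    linarith
  have hqum : (q : ℝ) * u m = ((n:ℝ) - r) * x := by
    rw [← hqm, hx]; field_simp
  have hur : u r ≤ C := le_trans (le_abs_self _) (hCr r (Finset.mem_Icc.mpr ⟨hr1, hrm⟩))
  have hrR : (r : ℝ) ≤ m := by exact_mod_cast hrm
  have hr0 : (0:ℝ) ≤ r := by positivity
  have key : u r ≤ (r : ℝ) * x + ((m:ℝ) * |x| + C) := by
    nlinarith [le_abs_self x, neg_abs_le x, mul_le_mul_of_nonneg_left (neg_abs_le x) hr0,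
      mul_le_mul_of_nonneg_right hrR (abs_nonneg x)]
  rw [div_le_iff₀ hn0]
  have expand : (x + ((m:ℝ) * |x| + C) / n) * n = n * x + ((m:ℝ) * |x| + C) := by
    field_simp
  rw [expand]
  calc u n ≤ (q:ℝ) * u m + u r := hun
    _ = ((n:ℝ) - r) * x + u r := by rw [hqum]
    _ ≤ ((n:ℝ) - r) * x + ((r:ℝ) * x + ((m:ℝ) * |x| + C)) := by linarith
    _ = (n:ℝ) * x + ((m:ℝ) * |x| + C) := by ring

lemma fekete_tendsto (u : ℕ → ℝ) (hsub : ∀ n m : ℕ, 1 ≤ n → 1 ≤ m → u (n + m) ≤ u n + u m) :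
    Tendsto (fun n : ℕ => ((u n / n : ℝ) : EReal)) atTop
      (nhds (⨅ n : {n : ℕ // 1 ≤ n}, ((u n / n : ℝ) : EReal))) := by
  have hne : Nonempty {n : ℕ // 1 ≤ n} := ⟨⟨1, le_rfl⟩⟩
  refine tendsto_of_le_liminf_of_limsup_le ?_ ?_ (by isBoundedDefault) (by isBoundedDefault)
  · refine le_liminf_of_le (by isBoundedDefault) ?_
    filter_upwards [eventually_ge_atTop 1] with n hn
    exact iInf_le _ (⟨n, hn⟩ : {n : ℕ // 1 ≤ n})
  · refine le_iInf ?_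
    rintro ⟨m, hm⟩
    obtain ⟨D, hD0, hD⟩ := fekete_bound u hsub m hm
    by_contra hlt
    push_neg at hlt
    obtain ⟨c, hc1, hc2⟩ := EReal.exists_between_coe_real hlt
    have hε : (0:ℝ) < c - u m / m := by
      have : u m / m < c := by exact_mod_cast hc1
      linarith
    have h0 : Tendsto (fun n : ℕ => D / n) atTop (nhds 0) :=
      tendsto_const_div_atTop_nhds_zero_nat D
    have h1 : ∀ᶠ n : ℕ in atTop, D / n < c - u m / m := h0.eventually_lt_const hε
    have hev : ∀ᶠ n : ℕ in atTop, ((u n / n : ℝ) : EReal) ≤ (c : EReal) := by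
      filter_upwards [eventually_ge_atTop 1, h1] with n hn hDn
      have := hD n hn
      exact_mod_cast (EReal.coe_le_coe_iff.mpr (by linarith))
    have hls := limsup_le_of_le (by isBoundedDefault) hev
    exact (hc2.not_ge hls).elim

lemma coe_bot_iff {α : Type*} {l : Filter α} {a : α → ℝ} :
    Tendsto (fun n => ((a n : ℝ) : EReal)) l (nhds ⊥) ↔ Tendsto a l atBot := by
  constructor
  · intro h
    rw [tendsto_atBot]
    intro b
    filter_upwards [EReal.tendsto_nhds_bot_iff_real.mp h b] with n hn
    exact le_of_lt (by exact_mod_cast hn)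
  · intro h
    rw [EReal.tendsto_nhds_bot_iff_real]
    intro x
    filter_upwards [tendsto_atBot.mp h (x - 1)] with n hn
    exact_mod_cast lt_of_le_of_lt hn (by linarith)

lemma coe_mul_tendsto {a : ℕ → ℝ} {A : EReal} (hA : A ≠ ⊤) {s : ℝ} (hs : 0 < s)
    (ha : Tendsto (fun n => ((a n : ℝ) : EReal)) atTop (nhds A)) :
    Tendsto (fun n => ((s * a n : ℝ) : EReal)) atTop (nhds ((s : EReal) * A)) ∧
      (s : EReal) * A ≠ ⊤ := by
  induction A using EReal.rec with
  | bot =>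
      rw [EReal.coe_mul_bot_of_pos hs]
      exact ⟨coe_bot_iff.mpr ((tendsto_const_mul_atBot_of_pos hs).mpr (coe_bot_iff.mp ha)),
        bot_ne_top⟩
  | coe r =>
      rw [← EReal.coe_mul]
      exact ⟨EReal.tendsto_coe.mpr ((EReal.tendsto_coe.mp ha).const_mul _), EReal.coe_ne_top _⟩
  | top => exact absurd rfl hA

lemma coe_add_tendsto {a b : ℕ → ℝ} {A B : EReal} (hA : A ≠ ⊤) (hB : B ≠ ⊤)
    (ha : Tendsto (fun n => ((a n : ℝ) : EReal)) atTop (nhds A))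
    (hb : Tendsto (fun n => ((b n : ℝ) : EReal)) atTop (nhds B)) :
    Tendsto (fun n => ((a n + b n : ℝ) : EReal)) atTop (nhds (A + B)) := by
  induction A using EReal.rec with
  | top => exact absurd rfl hA
  | bot =>
      rw [EReal.bot_add]
      refine coe_bot_iff.mpr ?_
      induction B using EReal.rec with
      | top => exact absurd rfl hB
      | bot => exact Filter.Tendsto.atBot_add_atBot (coe_bot_iff.mp ha) (coe_bot_iff.mp hb)
      | coe s => exact (coe_bot_iff.mp ha).atBot_add (EReal.tendsto_coe.mp hb)
  | coe r =>
      induction B using EReal.rec with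
      | top => exact absurd rfl hB
      | bot =>
          rw [EReal.add_bot]
          exact coe_bot_iff.mpr ((EReal.tendsto_coe.mp ha).add_atBot (coe_bot_iff.mp hb))
      | coe s =>
          rw [← EReal.coe_add]
          exact EReal.tendsto_coe.mpr ((EReal.tendsto_coe.mp ha).add (EReal.tendsto_coe.mp hb))

lemma coe_comb_tendsto {a b : ℕ → ℝ} {A B : EReal} (hA : A ≠ ⊤) (hB : B ≠ ⊤)
    (ha : Tendsto (fun n => ((a n : ℝ) : EReal)) atTop (nhds A))
    (hb : Tendsto (fun n => ((b n : ℝ) : EReal)) atTop (nhds B))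
    (t : ℝ) (ht : 0 ≤ t) (ht1 : t ≤ 1) :
    Tendsto (fun n => ((t * a n + (1 - t) * b n : ℝ) : EReal)) atTop
      (nhds ((t : EReal) * A + ((1 - t : ℝ) : EReal) * B)) := by
  rcases eq_or_lt_of_le ht with h0 | h0
  · simp only [← h0, EReal.coe_zero, zero_mul, sub_zero, EReal.coe_one, one_mul, zero_add]
    exact hb
  rcases eq_or_lt_of_le ht1 with h1 | h1
  · simp only [h1, EReal.coe_one, one_mul, sub_self, EReal.coe_zero, zero_mul, add_zero]
    exact ha
  have hma := coe_mul_tendsto hA h0 ha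
  have hmb := coe_mul_tendsto hB (by linarith : (0:ℝ) < 1 - t) hb
  exact coe_add_tendsto hma.2 hmb.2 hma.1 hmb.1


/-- If `(f_n)_{n≥1}` is a sequence of continuous affine functions on a compact convex
metrizable set `K` such that `(f_n(μ))_n` is subadditive for each `μ ∈ K`, then
`μ ↦ inf_n f_n(μ)/n = lim_n f_n(μ)/n` is upper semicontinuous and affine on `K`
(values taken in `EReal` since the limit of a subadditive sequence may be `-∞`). -/
theorem stmt6 {V : Type*} [AddCommGroup V] [Module ℝ V] [TopologicalSpace V]
    [IsTopologicalAddGroup V] [ContinuousSMul ℝ V]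
    (K : Set V) (hK : IsCompact K) (hconv : Convex ℝ K) (hmetr : TopologicalSpace.MetrizableSpace K)
    (f : ℕ → V → ℝ)
    (hcont : ∀ n, 1 ≤ n → ContinuousOn (f n) K)
    (haff : ∀ n, 1 ≤ n → ∀ μ ∈ K, ∀ ν ∈ K, ∀ t : ℝ, 0 ≤ t → t ≤ 1 →
      f n (t • μ + (1 - t) • ν) = t * f n μ + (1 - t) * f n ν)
    (hsub : ∀ μ ∈ K, ∀ n m : ℕ, 1 ≤ n → 1 ≤ m → f (n + m) μ ≤ f n μ + f m μ) :
    UpperSemicontinuousOn (fun μ => ⨅ n : {n : ℕ // 1 ≤ n}, ((f n μ / n : ℝ) : EReal)) K ∧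
    (∀ μ ∈ K, Tendsto (fun n : ℕ => ((f n μ / n : ℝ) : EReal)) atTop
      (nhds (⨅ n : {n : ℕ // 1 ≤ n}, ((f n μ / n : ℝ) : EReal)))) ∧
    (∀ μ ∈ K, ∀ ν ∈ K, ∀ t : ℝ, 0 ≤ t → t ≤ 1 →
      (⨅ n : {n : ℕ // 1 ≤ n}, ((f n (t • μ + (1 - t) • ν) / n : ℝ) : EReal)) =
        (t : EReal) * (⨅ n : {n : ℕ // 1 ≤ n}, ((f n μ / n : ℝ) : EReal)) +
        ((1 - t : ℝ) : EReal) * (⨅ n : {n : ℕ // 1 ≤ n}, ((f n ν / n : ℝ) : EReal))) := by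
  have hne : Nonempty {n : ℕ // 1 ≤ n} := ⟨⟨1, le_rfl⟩⟩
  refine ⟨?_, fun μ hμ => fekete_tendsto _ (hsub μ hμ), ?_⟩
  · apply upperSemicontinuousOn_iInf
    rintro ⟨n, hn⟩
    exact (continuous_coe_real_ereal.comp_continuousOn
      ((hcont n hn).div_const _)).upperSemicontinuousOn
  · intro μ hμ ν hν t ht ht1
    have hw : t • μ + (1 - t) • ν ∈ K := hconv hμ hν ht (by linarith) (by ring)
    have h1 := fekete_tendsto (fun n => f n (t • μ + (1 - t) • ν)) (hsub _ hw)
    have ha := fekete_tendsto (fun n => f n μ) (hsub μ hμ)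
    have hb := fekete_tendsto (fun n => f n ν) (hsub ν hν)
    have hAtop : (⨅ n : {n : ℕ // 1 ≤ n}, ((f n μ / n : ℝ) : EReal)) ≠ ⊤ :=
      (lt_of_le_of_lt (iInf_le _ (⟨1, le_rfl⟩ : {n : ℕ // 1 ≤ n})) (EReal.coe_lt_top _)).ne
    have hBtop : (⨅ n : {n : ℕ // 1 ≤ n}, ((f n ν / n : ℝ) : EReal)) ≠ ⊤ :=
      (lt_of_le_of_lt (iInf_le _ (⟨1, le_rfl⟩ : {n : ℕ // 1 ≤ n})) (EReal.coe_lt_top _)).ne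
    have h3 := coe_comb_tendsto hAtop hBtop ha hb t ht ht1
    have heq : (fun n : ℕ => ((f n (t • μ + (1 - t) • ν) / n : ℝ) : EReal)) =ᶠ[atTop]
        (fun n : ℕ => ((t * (f n μ / n) + (1 - t) * (f n ν / n) : ℝ) : EReal)) := by
      filter_upwards [eventually_ge_atTop 1] with n hn
      rw [haff n hn μ hμ ν hν t ht ht1]
      exact congrArg _ (by ring)
    exact tendsto_nhds_unique (h1.congr' heq) h3
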